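/- For the maximally entangled state ρ₀ = |Φ⟩⟨Φ| of local dimension d_s subjected to the 'global dephasing' map ρ = (1−ε)ρ₀ + (ε/d_s) Σ_i |ii⟩⟨ii|, 0 ≤ ε ≤ 1, one has ‖ρ^{T_B}‖₁ = d_s − (d_s−1)ε, hence E_N(ρ) − E_N(ρ₀) = log₂[1 − (1 − 1/d_s) ε]. -/

import Mathlib

open Matrix
open scoped ComplexOrder

/-- Trace norm ‖A‖₁ = Tr √(AᴴA). -/
noncomputable def traceNorm {n : Type*} [Fintype n] [DecidableEq n]
    (A : Matrix n n ℂ) : ℝ :=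
  (((Matrix.posSemidef_conjTranspose_mul_self A).1.eigenvectorUnitary.1 *
      diagonal (((↑) : ℝ → ℂ) ∘ (√·) ∘ (Matrix.posSemidef_conjTranspose_mul_self A).1.eigenvalues) *
      (star (Matrix.posSemidef_conjTranspose_mul_self A).1.eigenvectorUnitary :
        Matrix n n ℂ)).trace).re


/-- Partial transpose over the B factor. -/
def ptB {a b : Type*} (M : Matrix (a × b) (a × b) ℂ) : Matrix (a × b) (a × b) ℂ :=
  Matrix.of fun p q => M (p.1, q.2) (q.1, p.2)

/-- |Φ⟩⟨Φ| = (1/d) Σ_{ij} |ii⟩⟨jj|, the maximally entangled state of local dimension d. -/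
noncomputable def maxEnt (d : ℕ) : Matrix (Fin d × Fin d) (Fin d × Fin d) ℂ :=
  Matrix.of fun p q => if p.1 = p.2 ∧ q.1 = q.2 then ((d : ℂ))⁻¹ else 0

/-- Σᵢ |ii⟩⟨ii|, the diagonal correlation projector. -/
def diagCorr (d : ℕ) : Matrix (Fin d × Fin d) (Fin d × Fin d) ℂ :=
  Matrix.of fun p q => if p.1 = p.2 ∧ q = p then 1 else 0

section
open scoped MatrixOrder

lemma traceNorm_of_diag {n : Type*} [Fintype n] [DecidableEq n] (A : Matrix n n ℂ)
    (f : n → ℝ) (hf : ∀ p, 0 ≤ f p)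
    (h : Aᴴ * A = Matrix.diagonal (fun p => ((f p : ℂ))^2)) :
    traceNorm A = ∑ p, f p := by
  have hB : (Matrix.diagonal (fun p => (f p : ℂ))).PosSemidef := by
    rw [Matrix.posSemidef_diagonal_iff]
    intro i
    exact_mod_cast hf i
  have hsq : (Matrix.diagonal (fun p => (f p : ℂ)))^2 = Aᴴ * A := by
    rw [pow_two, Matrix.diagonal_mul_diagonal, h]
    congr 1
    ext p
    ring
  have hAA := Matrix.posSemidef_conjTranspose_mul_self A
  have e1 : traceNorm A = (cfc Real.sqrt (Aᴴ * A)).trace.re := by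
    rw [hAA.1.cfc_eq]; rfl
  have e2 : CFC.sqrt (Aᴴ * A) = Matrix.diagonal (fun p => (f p : ℂ)) :=
    CFC.sqrt_unique (by rw [← pow_two]; exact hsq) (Matrix.nonneg_iff_posSemidef.mpr hB)
  rw [CFC.sqrt_eq_real_sqrt _ (Matrix.nonneg_iff_posSemidef.mpr hAA), cfcₙ_eq_cfc] at e2
  rw [e1, e2, Matrix.trace_diagonal]
  simp

end

lemma Aentry (d : ℕ) (ε : ℝ)
    (ρ : Matrix (Fin d × Fin d) (Fin d × Fin d) ℂ)
    (hρ : ρ = ((1 - ε : ℝ) : ℂ) • maxEnt d + ((ε / d : ℝ) : ℂ) • diagCorr d)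
    (m n i j : Fin d) :
    ptB ρ (m, n) (i, j)
      = if m = j ∧ n = i then (((1-ε)/d + if m = n then ε/d else 0 : ℝ) : ℂ) else 0 := by
  subst hρ
  simp only [ptB, maxEnt, diagCorr, Matrix.add_apply, Matrix.smul_apply, Matrix.of_apply,
    Prod.mk.injEq, smul_ite, smul_zero]
  push_cast
  split_ifs with h1 h2 h3 h4 h5 h6 h7 h8 h9 <;>
    simp_all <;> field_simp <;> ring_nf <;> simp_all <;>
      first | tauto | (subst_vars; simp_all) | (exact absurd (h5.2.symm.trans h5.1) h2)

lemma traceNorm_ptB (d : ℕ) (hd : 0 < d) (ε : ℝ) (hε0 : 0 ≤ ε) (hε1 : ε ≤ 1)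
    (ρ : Matrix (Fin d × Fin d) (Fin d × Fin d) ℂ)
    (hρ : ρ = ((1 - ε : ℝ) : ℂ) • maxEnt d + ((ε / d : ℝ) : ℂ) • diagCorr d) :
    traceNorm (ptB ρ) = d - (d - 1) * ε := by
  set g : Fin d × Fin d → ℝ := fun p => (1-ε)/d + if p.1 = p.2 then ε/d else 0 with hg
  have hdR : (0:ℝ) < d := by exact_mod_cast hd
  have hgnn : ∀ p, 0 ≤ g p := by
    intro p
    have h1 : (0:ℝ) ≤ (1-ε)/d := div_nonneg (by linarith) hdR.le
    have h2 : (0:ℝ) ≤ ε/d := div_nonneg hε0 hdR.le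
    simp only [hg]
    split_ifs <;> linarith
  have key : (ptB ρ)ᴴ * ptB ρ = Matrix.diagonal (fun p => ((g p : ℂ))^2) := by
    ext ⟨i,j⟩ ⟨k,l⟩
    rw [Matrix.mul_apply]
    rw [Finset.sum_eq_single (⟨j,i⟩ : Fin d × Fin d)]
    · simp only [Matrix.conjTranspose_apply, Aentry d ε ρ hρ, Matrix.diagonal_apply,
        Prod.mk.injEq, hg]
      by_cases hik : i = k <;> by_cases hjl : j = l
      · subst hik; subst hjl
        have hsym : (if j = i then ε/(d:ℝ) else 0) = (if i = j then ε/(d:ℝ) else 0) := by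
          simp [eq_comm]
        simp only [hsym]
        norm_num [sq, Complex.star_def, Complex.conj_ofReal]
      · simp [hjl]
      · simp [hik]
      · simp [hjl]
    · rintro ⟨m,n⟩ _ hx
      rw [Matrix.conjTranspose_apply, Aentry d ε ρ hρ, if_neg, star_zero, zero_mul]
      rintro ⟨rfl, rfl⟩
      exact hx rfl
    · intro h
      exact absurd (Finset.mem_univ _) h
  rw [traceNorm_of_diag (ptB ρ) g hgnn key]
  rw [hg]
  rw [Finset.sum_add_distrib]
  have h1 : ∑ _p : Fin d × Fin d, (1-ε)/d = d * (1-ε) := by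
    rw [Finset.sum_const]
    simp [Fintype.card_prod]
    field_simp
  have h2 : ∑ p : Fin d × Fin d, (if p.1 = p.2 then ε/d else 0) = ε := by
    rw [Fintype.sum_prod_type]
    simp [Finset.sum_ite_eq]
    field_simp
  rw [h1, h2]
  ring

/-- for the maximally entangled state under global dephasing
ρ = (1−ε)|Φ⟩⟨Φ| + (ε/d_s) Σᵢ|ii⟩⟨ii|, 0 ≤ ε ≤ 1, one has ‖ρ^{T_B}‖₁ = d_s − (d_s−1)ε,
hence E_N(ρ) − E_N(ρ₀) = log₂[1 − (1 − 1/d_s)ε]. -/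
theorem maxEnt_dephasing_negativity (d : ℕ) (hd : 0 < d)
    (ε : ℝ) (hε0 : 0 ≤ ε) (hε1 : ε ≤ 1)
    (ρ : Matrix (Fin d × Fin d) (Fin d × Fin d) ℂ)
    (hρ : ρ = ((1 - ε : ℝ) : ℂ) • maxEnt d + ((ε / d : ℝ) : ℂ) • diagCorr d) :
    traceNorm (ptB ρ) = d - (d - 1) * ε
      ∧ Real.logb 2 (traceNorm (ptB ρ)) - Real.logb 2 (traceNorm (ptB (maxEnt d)))
          = Real.logb 2 (1 - (1 - 1 / (d : ℝ)) * ε) := by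
  have hdR : (0:ℝ) < d := by exact_mod_cast hd
  have hmain := traceNorm_ptB d hd ε hε0 hε1 ρ hρ
  have h0 : traceNorm (ptB (maxEnt d)) = d := by
    have := traceNorm_ptB d hd 0 le_rfl zero_le_one (maxEnt d) (by
      norm_num)
    simpa using this
  refine ⟨hmain, ?_⟩
  rw [hmain, h0]
  have hd1 : (1:ℝ) ≤ d := by exact_mod_cast hd
  have hpos : (0:ℝ) < d - (d - 1) * ε := by nlinarith
  rw [← Real.logb_div (ne_of_gt hpos) (ne_of_gt hdR)]
  congr 1
  field_simp
  try ring
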